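/- There exists a constant c > 0 such that for every L ≥ 1, every α ∈ (0,1] and every t ≥ 0, the birth-and-death chain with parameters L and α satisfies | ‖P^t(0,·) − P^t(L,·)‖_TV − (1 − 2α/L)^t | ≤ c·L·α. -/

import Mathlib

open MeasureTheory Filter Topology

/-- Transition probabilities of the birth-and-death chain on `{0,…,L}` with parameter `α`:
`P(0,1) = P(L,L−1) = α`, `P(0,0) = P(L,L) = 1−α`, and `P(i,i+1) = P(i,i−1) = 1/2` for
`0 < i < L`. -/
noncomputable def bdKernel (L : ℕ) (α : ℝ) (i j : ℕ) : ℝ :=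
  if i = 0 then (if j = 1 then α else if j = 0 then 1 - α else 0)
  else if i = L then (if j = L - 1 then α else if j = L then 1 - α else 0)
  else if i < L then (if j = i + 1 ∨ j = i - 1 then 1 / 2 else 0)
  else 0

/-- `bdDist L α x t j = P^t(x, j)`, the probability that the birth-and-death chain started at
`x` is at state `j` at time `t`. -/
noncomputable def bdDist (L : ℕ) (α : ℝ) (x : ℕ) : ℕ → ℕ → ℝ
  | 0 => fun j => if j = x then 1 else 0
  | t + 1 => fun j => ∑ i ∈ Finset.range (L + 1), bdDist L α x t i * bdKernel L α i j

/-- Total variation distance between two distributions on the state space `{0,…,L}`. -/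
noncomputable def bdTV (L : ℕ) (μ ν : ℕ → ℝ) : ℝ :=
  ⨆ A : Set ℕ,
    |∑ i ∈ Finset.range (L + 1), Set.indicator A μ i -
      ∑ i ∈ Finset.range (L + 1), Set.indicator A ν i|

open Classical in
/-- `bdStay L α T x A = P(X_t ∈ A_t for all 0 ≤ t ≤ T | X_0 = x)` for the birth-and-death
chain with parameters `L` and `α`. -/
noncomputable def bdStay (L : ℕ) (α : ℝ) (T : ℕ) (x : ℕ) (A : ℕ → Set ℕ) : ℝ :=
  ∑ p : Fin (T + 1) → Fin (L + 1),
    if (p 0 : ℕ) = x ∧ ∀ t : Fin (T + 1), (p t : ℕ) ∈ A (t : ℕ) then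
      ∏ i : Fin T, bdKernel L α (p i.castSucc) (p i.succ) else 0

/-- The separation `S^A_T(0,L)` of a separating sequence `A` for the birth-and-death chain. -/
noncomputable def bdSep (L : ℕ) (α : ℝ) (T : ℕ) (A : ℕ → Set ℕ) : ℝ :=
  bdStay L α T 0 A + bdStay L α T L (fun t => (A t)ᶜ)

open Finset

open Finset

lemma row_zero' {L : ℕ} {α : ℝ} (hL : 1 ≤ L) (f : ℕ → ℝ) :
    ∑ j ∈ range (L+1), bdKernel L α 0 j * f j = α * f 1 + (1 - α) * f 0 := by
  have h : ∀ j, bdKernel L α 0 j * f j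
      = (if j = 1 then α * f 1 else 0) + (if j = 0 then (1-α) * f 0 else 0) := by
    intro j
    simp only [bdKernel, if_pos rfl]
    split_ifs with h1 h2 <;> simp_all
  simp only [h, Finset.sum_add_distrib, Finset.sum_ite_eq' (range (L+1))]
  have h1 : (1:ℕ) ∈ range (L+1) := by simp; omega
  have h0 : (0:ℕ) ∈ range (L+1) := by simp
  rw [if_pos h1, if_pos h0]

open Finset

lemma row_last' {L : ℕ} {α : ℝ} (hL : 1 ≤ L) (f : ℕ → ℝ) :
    ∑ j ∈ range (L+1), bdKernel L α L j * f j = α * f (L-1) + (1 - α) * f L := by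
  have h : ∀ j, bdKernel L α L j * f j
      = (if j = L-1 then α * f (L-1) else 0) + (if j = L then (1-α) * f L else 0) := by
    intro j
    unfold bdKernel
    split_ifs <;> first | (exfalso; omega) | ring1 | (subst_vars; ring1)
  simp only [h, Finset.sum_add_distrib, Finset.sum_ite_eq' (range (L+1))]
  have h1 : L - 1 ∈ range (L+1) := by simp
  have h0 : L ∈ range (L+1) := by simp
  rw [if_pos h1, if_pos h0]

lemma row_mid' {L i : ℕ} {α : ℝ} (hi : 0 < i) (hiL : i < L) (f : ℕ → ℝ) :
    ∑ j ∈ range (L+1), bdKernel L α i j * f j = (1/2) * f (i+1) + (1/2) * f (i-1) := by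
  have h : ∀ j, bdKernel L α i j * f j
      = (if j = i+1 then (1/2) * f (i+1) else 0) + (if j = i-1 then (1/2) * f (i-1) else 0) := by
    intro j
    unfold bdKernel
    split_ifs <;> first | (exfalso; omega) | ring1 | (subst_vars; ring1)
  simp only [h, Finset.sum_add_distrib, Finset.sum_ite_eq' (range (L+1))]
  have h1 : i + 1 ∈ range (L+1) := by simp; omega
  have h0 : i - 1 ∈ range (L+1) := by simp; omega
  rw [if_pos h1, if_pos h0]

lemma row_sum' {L i : ℕ} {α : ℝ} (hL : 1 ≤ L) (hi : i ≤ L) :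
    ∑ j ∈ range (L+1), bdKernel L α i j = 1 := by
  have : ∑ j ∈ range (L+1), bdKernel L α i j
      = ∑ j ∈ range (L+1), bdKernel L α i j * (fun _ => (1:ℝ)) j := by simp
  rw [this]
  rcases Nat.eq_zero_or_pos i with h0 | h0
  · rw [h0, row_zero' hL]; norm_num
  rcases eq_or_lt_of_le hi with hE | hlt
  · rw [hE, row_last' hL]; norm_num
  · rw [row_mid' h0 hlt]; norm_num

open Finset

lemma bdKernel_nonneg {L : ℕ} {α : ℝ} (hα : α ∈ Set.Ioc (0:ℝ) 1) (i j : ℕ) :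
    0 ≤ bdKernel L α i j := by
  obtain ⟨h1, h2⟩ := hα
  unfold bdKernel; split_ifs <;> linarith

lemma bdDist_nonneg {L : ℕ} {α : ℝ} (hα : α ∈ Set.Ioc (0:ℝ) 1) (x t j : ℕ) :
    0 ≤ bdDist L α x t j := by
  induction t generalizing j with
  | zero => simp only [bdDist]; positivity
  | succ t ih =>
    exact Finset.sum_nonneg fun i _ => mul_nonneg (ih i) (bdKernel_nonneg hα i j)

/-- expectation transfer: `E[f(X_{t+1})] = E[(Kf)(X_t)]`. -/
lemma bdDist_step {L x t : ℕ} {α : ℝ} (f : ℕ → ℝ) :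
    ∑ j ∈ range (L+1), bdDist L α x (t+1) j * f j
      = ∑ i ∈ range (L+1), bdDist L α x t i * (∑ j ∈ range (L+1), bdKernel L α i j * f j) := by
  simp only [bdDist, Finset.sum_mul, Finset.mul_sum]
  rw [Finset.sum_comm]
  congr 1; ext i; congr 1; ext j; ring

lemma bdDist_sum {L x : ℕ} {α : ℝ} (hL : 1 ≤ L) (hx : x ≤ L) (t : ℕ) :
    ∑ j ∈ range (L+1), bdDist L α x t j = 1 := by
  induction t with
  | zero =>
    simp only [bdDist]
    rw [Finset.sum_ite_eq' (range (L+1))]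
    rw [if_pos (by simp; omega)]
  | succ t ih =>
    have := bdDist_step (L := L) (x := x) (t := t) (α := α) (fun _ => (1:ℝ))
    simp only [mul_one] at this
    rw [this]
    calc ∑ i ∈ range (L+1), bdDist L α x t i * (∑ j ∈ range (L+1), bdKernel L α i j)
        = ∑ i ∈ range (L+1), bdDist L α x t i := by
          apply Finset.sum_congr rfl
          intro i hi
          rw [row_sum' hL (by simpa using Nat.lt_succ_iff.mp (mem_range.mp hi)), mul_one]
      _ = 1 := ih

lemma bdDist_le_one {L x j : ℕ} {α : ℝ} (hα : α ∈ Set.Ioc (0:ℝ) 1) (hL : 1 ≤ L) (hx : x ≤ L)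
    (t : ℕ) (hj : j ∈ range (L+1)) : bdDist L α x t j ≤ 1 := by
  calc bdDist L α x t j ≤ ∑ i ∈ range (L+1), bdDist L α x t i :=
        Finset.single_le_sum (fun i _ => bdDist_nonneg hα x t i) hj
  _ = 1 := bdDist_sum hL hx t

lemma interior_bound {L x : ℕ} {α : ℝ} (hα : α ∈ Set.Ioc (0:ℝ) 1) (hL : 1 ≤ L)
    (hx : x = 0 ∨ x = L) (t : ℕ) :
    ∀ j, 0 < j → j < L → bdDist L α x t j ≤ 2 * α := by
  induction t with
  | zero =>
    intro j hj0 hjL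
    simp only [bdDist]
    rw [if_neg (by omega)]
    linarith [hα.1]
  | succ t ih =>
    intro j hj0 hjL
    simp only [bdDist]
    have hterm : ∀ i ∈ range (L+1), bdDist L α x t i * bdKernel L α i j ≤
        (if i = j-1 then α else 0) + (if i = j+1 then α else 0) := by
      intro i hi
      have h0 : 0 ≤ bdDist L α x t i := bdDist_nonneg hα x t i
      have h1 : bdDist L α x t i ≤ 1 := bdDist_le_one hα hL (by omega) t hi
      unfold bdKernel
      split_ifs <;>
        first
        | (exfalso; omega)
        | nlinarith [hα.1, hα.2]
        | (nlinarith [ih i (by omega) (by omega), hα.1, hα.2])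
    calc ∑ i ∈ range (L+1), bdDist L α x t i * bdKernel L α i j
        ≤ ∑ i ∈ range (L+1), ((if i = j-1 then α else 0) + (if i = j+1 then α else 0)) :=
          Finset.sum_le_sum hterm
      _ = α + α := by
          rw [Finset.sum_add_distrib, Finset.sum_ite_eq' (range (L+1)),
            Finset.sum_ite_eq' (range (L+1)), if_pos (by simp; omega), if_pos (by simp; omega)]
      _ = 2 * α := by ring

open Finset

lemma row_psi {L i : ℕ} {α : ℝ} (hL : 1 ≤ L) (hi : i ≤ L) :
    ∑ j ∈ range (L+1), bdKernel L α i j * ((L:ℝ) - 2*j)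
      = ((L:ℝ) - 2*i) + (if i = 0 then -(2*α) else if i = L then 2*α else 0) := by
  rcases Nat.eq_zero_or_pos i with h0 | h0
  · subst h0
    rw [row_zero' hL, if_pos rfl]
    push_cast
    ring
  rcases eq_or_lt_of_le hi with hE | hlt
  · rw [hE, row_last' hL, if_neg (by omega), if_pos rfl]
    have : ((L - 1 : ℕ) : ℝ) = (L:ℝ) - 1 := by
      rw [Nat.cast_sub hL]; norm_num
    rw [this]
    ring
  · rw [row_mid' h0 hlt, if_neg (by omega), if_neg (by omega)]
    have : ((i - 1 : ℕ) : ℝ) = (i:ℝ) - 1 := by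
      rw [Nat.cast_sub h0]; norm_num
    rw [this]
    push_cast
    ring

/-- one-step recursion for `m_t = E[ψ(X_t)]`, `ψ(j) = L - 2j`. -/
lemma psi_step {L x t : ℕ} {α : ℝ} (hL : 1 ≤ L) (hx : x ≤ L) :
    ∑ j ∈ range (L+1), bdDist L α x (t+1) j * ((L:ℝ) - 2*j)
      = (∑ j ∈ range (L+1), bdDist L α x t j * ((L:ℝ) - 2*j))
        - 2*α * bdDist L α x t 0 + 2*α * bdDist L α x t L := by
  rw [bdDist_step]
  have : ∀ i ∈ range (L+1), bdDist L α x t i * (∑ j ∈ range (L+1), bdKernel L α i j * ((L:ℝ) - 2*j))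
      = bdDist L α x t i * ((L:ℝ) - 2*i)
        + ((if i = 0 then -(2*α) * bdDist L α x t 0 else 0)
          + (if i = L then 2*α * bdDist L α x t L else 0)) := by
    intro i hi
    rw [row_psi hL (by simpa using Nat.lt_succ_iff.mp (mem_range.mp hi))]
    rcases eq_or_ne i 0 with rfl | hi0
    · rw [if_pos rfl, if_pos rfl, if_neg (by omega)]; ring
    · rw [if_neg hi0, if_neg hi0]
      rcases eq_or_ne i L with rfl | hiL
      · rw [if_pos rfl, if_pos rfl]; ring
      · rw [if_neg hiL, if_neg hiL]; ring
  rw [Finset.sum_congr rfl this, Finset.sum_add_distrib, Finset.sum_add_distrib,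
    Finset.sum_ite_eq' (range (L+1)), Finset.sum_ite_eq' (range (L+1)),
    if_pos (by simp), if_pos (by simp)]
  ring

open Finset

/-- boundary/interior split of a sum over `range (L+1)`. -/
lemma sum_split {L : ℕ} (hL : 1 ≤ L) (f : ℕ → ℝ) :
    ∑ j ∈ range (L+1), f j = f 0 + f L + ∑ j ∈ ((range (L+1)).erase 0).erase L, f j := by
  have h0 : (0:ℕ) ∈ range (L+1) := by simp
  have hLm : L ∈ (range (L+1)).erase 0 := by
    rw [Finset.mem_erase]; constructor; omega; simp
  rw [← Finset.add_sum_erase _ f h0, ← Finset.add_sum_erase _ f hLm]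
  ring

lemma bd_mem_interior {L j : ℕ} (hj : j ∈ ((range (L+1)).erase 0).erase L) : 0 < j ∧ j < L := by
  simp only [Finset.mem_erase, Finset.mem_range] at hj
  omega

lemma card_interior {L : ℕ} (hL : 1 ≤ L) :
    (((range (L+1)).erase 0).erase L).card = L - 1 := by
  rw [Finset.card_erase_of_mem (by rw [Finset.mem_erase]; constructor; omega; simp),
    Finset.card_erase_of_mem (by simp), Finset.card_range]
  omega

/-- `bdTV` equals half the `ℓ¹` distance, provided both measures have total mass `1`. -/
lemma bdTV_eq_half_l1 {L : ℕ} (μ ν : ℕ → ℝ)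
    (hS : ∑ i ∈ range (L+1), μ i = ∑ i ∈ range (L+1), ν i) :
    bdTV L μ ν = (1/2) * ∑ i ∈ range (L+1), |μ i - ν i| := by
  classical
  have hd0 : ∑ i ∈ range (L+1), (μ i - ν i) = 0 := by
    rw [Finset.sum_sub_distrib, hS]; ring
  have hind : ∀ (A : Set ℕ),
      (∑ i ∈ range (L+1), Set.indicator A μ i) - ∑ i ∈ range (L+1), Set.indicator A ν i
        = ∑ i ∈ range (L+1), (if i ∈ A then μ i - ν i else 0) := by
    intro A
    rw [← Finset.sum_sub_distrib]
    apply Finset.sum_congr rfl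
    intro i _
    classical
    by_cases h : i ∈ A <;> simp [Set.indicator, h]
  have hupper : ∀ (A : Set ℕ),
      |(∑ i ∈ range (L+1), Set.indicator A μ i) - ∑ i ∈ range (L+1), Set.indicator A ν i|
        ≤ (1/2) * ∑ i ∈ range (L+1), |μ i - ν i| := by
    intro A
    rw [hind A]
    have key : (∑ i ∈ range (L+1), (2 * (if i ∈ A then μ i - ν i else 0) - (μ i - ν i)))
        = 2 * ∑ i ∈ range (L+1), (if i ∈ A then μ i - ν i else 0) := by
      rw [Finset.sum_sub_distrib, hd0, sub_zero, ← Finset.mul_sum]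
    have h2 : 2 * |∑ i ∈ range (L+1), (if i ∈ A then μ i - ν i else 0)|
        = |∑ i ∈ range (L+1), (2 * (if i ∈ A then μ i - ν i else 0) - (μ i - ν i))| := by
      rw [key, abs_mul]
      norm_num
    have h3 : |∑ i ∈ range (L+1), (2 * (if i ∈ A then μ i - ν i else 0) - (μ i - ν i))|
        ≤ ∑ i ∈ range (L+1), |μ i - ν i| := by
      refine le_trans (Finset.abs_sum_le_sum_abs _ _) (Finset.sum_le_sum ?_)
      intro i _
      by_cases h : i ∈ A
      · rw [if_pos h]; rw [show 2 * (μ i - ν i) - (μ i - ν i) = μ i - ν i by ring]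
      · rw [if_neg h]; rw [show 2 * (0:ℝ) - (μ i - ν i) = -(μ i - ν i) by ring, abs_neg]
    linarith [h2, h3, abs_nonneg (∑ i ∈ range (L+1), (if i ∈ A then μ i - ν i else 0))]
  have hA0 : |(∑ i ∈ range (L+1), Set.indicator {i | ν i < μ i} μ i)
      - ∑ i ∈ range (L+1), Set.indicator {i | ν i < μ i} ν i|
        = (1/2) * ∑ i ∈ range (L+1), |μ i - ν i| := by
    rw [hind]
    have : ∀ i ∈ range (L+1), (if i ∈ {i | ν i < μ i} then μ i - ν i else 0)
        = (1/2) * (|μ i - ν i| + (μ i - ν i)) := by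
      intro i _
      simp only [Set.mem_setOf_eq]
      by_cases h : ν i < μ i
      · rw [if_pos h, abs_of_pos (by linarith)]; ring
      · rw [if_neg h, abs_of_nonpos (by simp only [not_lt] at h; linarith)]; ring
    rw [Finset.sum_congr rfl this, ← Finset.mul_sum, Finset.sum_add_distrib]
    rw [hd0, add_zero, abs_mul, abs_of_nonneg (show (0:ℝ) ≤ 1/2 by norm_num),
      abs_of_nonneg (Finset.sum_nonneg fun i _ => abs_nonneg _)]
  have hbdd : BddAbove (Set.range fun A : Set ℕ =>
      |(∑ i ∈ range (L+1), Set.indicator A μ i) - ∑ i ∈ range (L+1), Set.indicator A ν i|) :=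
    ⟨(1/2) * ∑ i ∈ range (L+1), |μ i - ν i|, by rintro y ⟨A, rfl⟩; exact hupper A⟩
  apply le_antisymm
  · exact ciSup_le hupper
  · rw [← hA0]
    exact le_ciSup hbdd {i | ν i < μ i}

lemma geom_err {r δ : ℝ} (hr0 : 0 ≤ r) (hr1 : r < 1) (E : ℕ → ℝ) (h0 : E 0 = 0)
    (hstep : ∀ t, |E (t+1) - r * E t| ≤ δ) : ∀ t, |E t| ≤ δ / (1 - r) := by
  have hδ : 0 ≤ δ := le_trans (abs_nonneg _) (hstep 0)
  intro t
  induction t with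
  | zero =>
    rw [h0, abs_zero]
    have hpos : 0 < 1 - r := by linarith
    positivity
  | succ t ih =>
    have h1 : |E (t+1)| ≤ |E (t+1) - r * E t| + r * |E t| := by
      have := abs_add_le (E (t+1) - r * E t) (r * E t)
      rw [sub_add_cancel, abs_mul, abs_of_nonneg hr0] at this
      exact this
    have h2 : r * |E t| ≤ r * (δ / (1 - r)) := by
      apply mul_le_mul_of_nonneg_left ih hr0
    have : |E (t+1) - r * E t| ≤ δ := hstep t
    have hpos : 0 < 1 - r := by linarith
    calc |E (t+1)| ≤ δ + r * (δ / (1-r)) := by linarith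
    _ = δ / (1 - r) := by field_simp; ring

open Finset

noncomputable def bdD (L : ℕ) (α : ℝ) (t j : ℕ) : ℝ := bdDist L α 0 t j - bdDist L α L t j
noncomputable def bdM (L : ℕ) (α : ℝ) (t : ℕ) : ℝ :=
  ∑ j ∈ range (L+1), bdD L α t j * ((L:ℝ) - 2*j)
noncomputable def bdS (L : ℕ) (α : ℝ) (t : ℕ) : ℝ := bdD L α t 0 - bdD L α t L

section Main
variable {L : ℕ} {α : ℝ}

lemma bdD_abs_le (hα : α ∈ Set.Ioc (0:ℝ) 1) (hL : 1 ≤ L) {t j : ℕ} (hj0 : 0 < j) (hjL : j < L) :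
    |bdD L α t j| ≤ 4 * α := by
  have h1 := interior_bound hα hL (Or.inl rfl) t j hj0 hjL
  have h2 := interior_bound hα hL (Or.inr rfl) t j hj0 hjL
  have h3 := bdDist_nonneg (L := L) hα 0 t j
  have h4 := bdDist_nonneg (L := L) hα L t j
  rw [bdD, abs_sub_le_iff]
  constructor <;> linarith

lemma bdD_interior_abs (hα : α ∈ Set.Ioc (0:ℝ) 1) (hL : 1 ≤ L) (t : ℕ) :
    ∑ j ∈ ((range (L+1)).erase 0).erase L, |bdD L α t j| ≤ 4 * α * L := by
  calc ∑ j ∈ ((range (L+1)).erase 0).erase L, |bdD L α t j|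
      ≤ (((range (L+1)).erase 0).erase L).card • (4 * α) := by
        apply Finset.sum_le_card_nsmul
        intro j hj
        obtain ⟨hj0, hjL⟩ := bd_mem_interior hj
        exact bdD_abs_le hα hL hj0 hjL
    _ = ((L - 1 : ℕ) : ℝ) * (4 * α) := by rw [card_interior hL, nsmul_eq_mul]
    _ ≤ (L : ℝ) * (4 * α) := by
        apply mul_le_mul_of_nonneg_right _ (by linarith [hα.1])
        exact_mod_cast Nat.sub_le L 1
    _ = 4 * α * L := by ring

lemma bdD_sum_zero (hL : 1 ≤ L) (t : ℕ) : ∑ j ∈ range (L+1), bdD L α t j = 0 := by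
  simp only [bdD]
  rw [Finset.sum_sub_distrib, bdDist_sum hL (by omega), bdDist_sum hL le_rfl]
  ring

lemma bdD_boundary_sum (hα : α ∈ Set.Ioc (0:ℝ) 1) (hL : 1 ≤ L) (t : ℕ) :
    |bdD L α t 0 + bdD L α t L| ≤ 4 * α * L := by
  have hsplit := sum_split hL (bdD L α t)
  rw [bdD_sum_zero hL t] at hsplit
  have : bdD L α t 0 + bdD L α t L = -(∑ j ∈ ((range (L+1)).erase 0).erase L, bdD L α t j) := by
    linarith
  rw [this, abs_neg]
  calc |∑ j ∈ ((range (L+1)).erase 0).erase L, bdD L α t j|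
      ≤ ∑ j ∈ ((range (L+1)).erase 0).erase L, |bdD L α t j| := Finset.abs_sum_le_sum_abs _ _
    _ ≤ 4 * α * L := bdD_interior_abs hα hL t

lemma bdD_l1_vs_s (hα : α ∈ Set.Ioc (0:ℝ) 1) (hL : 1 ≤ L) (t : ℕ) :
    abs ((∑ j ∈ range (L+1), |bdD L α t j|) - |bdS L α t|) ≤ 8 * α * L := by
  have hsplit := sum_split hL (fun j => |bdD L α t j|)
  have hint := bdD_interior_abs hα hL t
  have hbd := bdD_boundary_sum hα hL t
  have hintnn : (0:ℝ) ≤ ∑ j ∈ ((range (L+1)).erase 0).erase L, |bdD L α t j| :=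
    Finset.sum_nonneg fun j _ => abs_nonneg _
  set a := bdD L α t 0
  set b := bdD L α t L
  have hs : bdS L α t = a - b := rfl
  -- |a| + |b| ≤ |a - b| + |a + b|
  have e1 : (2:ℝ) * |a| = |(a - b) + (a + b)| := by
    rw [show (a - b) + (a + b) = 2*a by ring, abs_mul]; norm_num
  have e2 : (2:ℝ) * |b| = |(a + b) - (a - b)| := by
    rw [show (a + b) - (a - b) = 2*b by ring, abs_mul]; norm_num
  have f1 : |(a - b) + (a + b)| ≤ |a - b| + |a + b| := abs_add_le _ _
  have f2 : |(a + b) - (a - b)| ≤ |a + b| + |a - b| := abs_sub _ _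
  have g1 : |a - b| ≤ |a| + |b| := abs_sub _ _
  have hαL : 0 < α * L := by
    have : (0:ℝ) < L := by exact_mod_cast hL
    have := hα.1; positivity
  rw [hs, abs_sub_le_iff]
  constructor
  · -- ∑|D| ≤ |a-b| + 8αL
    rw [hsplit]
    nlinarith [abs_nonneg (a-b), abs_nonneg (a+b)]
  · rw [hsplit]
    nlinarith [abs_nonneg (a-b), abs_nonneg (a+b)]
end Main

open Finset

section Main2
variable {L : ℕ} {α : ℝ}

lemma bdM_split (hα : α ∈ Set.Ioc (0:ℝ) 1) (hL : 1 ≤ L) (t : ℕ) :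
    |bdM L α t - (L:ℝ) * bdS L α t| ≤ 4 * α * L * L := by
  have hsplit := sum_split hL (fun j => bdD L α t j * ((L:ℝ) - 2*j))
  have hψ0 : ((L:ℝ) - 2*(0:ℕ)) = (L:ℝ) := by push_cast; ring
  have hψL : ((L:ℝ) - 2*(L:ℕ)) = -(L:ℝ) := by push_cast; ring
  have hM : bdM L α t - (L:ℝ) * bdS L α t
      = ∑ j ∈ ((range (L+1)).erase 0).erase L, bdD L α t j * ((L:ℝ) - 2*j) := by
    rw [bdM, hsplit, bdS]
    push_cast
    ring
  rw [hM]
  calc |∑ j ∈ ((range (L+1)).erase 0).erase L, bdD L α t j * ((L:ℝ) - 2*j)|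
      ≤ ∑ j ∈ ((range (L+1)).erase 0).erase L, |bdD L α t j * ((L:ℝ) - 2*j)| :=
        Finset.abs_sum_le_sum_abs _ _
    _ ≤ ∑ j ∈ ((range (L+1)).erase 0).erase L, |bdD L α t j| * L := by
        apply Finset.sum_le_sum
        intro j hj
        obtain ⟨hj0, hjL⟩ := bd_mem_interior hj
        rw [abs_mul]
        apply mul_le_mul_of_nonneg_left _ (abs_nonneg _)
        rw [abs_le]
        have : (j:ℝ) ≤ L := by exact_mod_cast le_of_lt hjL
        have hj0' : (0:ℝ) ≤ j := by positivity
        constructor <;> linarith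
    _ = (∑ j ∈ ((range (L+1)).erase 0).erase L, |bdD L α t j|) * L := by
        rw [Finset.sum_mul]
    _ ≤ (4 * α * L) * L := by
        apply mul_le_mul_of_nonneg_right (bdD_interior_abs hα hL t)
        positivity
    _ = 4 * α * L * L := by ring

lemma bdM_zero (hL : 1 ≤ L) : bdM L α 0 = 2 * L := by
  have h : ∀ j ∈ range (L+1), bdD L α 0 j * ((L:ℝ) - 2*j)
      = (if j = 0 then (L:ℝ) else 0) + (if j = L then (L:ℝ) else 0) := by
    intro j _
    simp only [bdD, bdDist]
    rcases eq_or_ne j 0 with rfl | hj0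
    · rw [if_pos rfl, if_pos rfl, if_neg (by omega), if_neg (by omega)]
      push_cast; ring
    · rw [if_neg hj0, if_neg hj0]
      rcases eq_or_ne j L with rfl | hjL
      · rw [if_pos rfl, if_pos rfl]
        push_cast; ring
      · rw [if_neg hjL, if_neg hjL]
        ring
  rw [bdM, Finset.sum_congr rfl h, Finset.sum_add_distrib,
    Finset.sum_ite_eq' (range (L+1)), Finset.sum_ite_eq' (range (L+1)),
    if_pos (by simp), if_pos (by simp)]
  ring

lemma bdM_step (hL : 1 ≤ L) (t : ℕ) :
    bdM L α (t+1) = bdM L α t - 2 * α * bdS L α t := by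
  have h0 := psi_step (L := L) (α := α) (x := 0) (t := t) hL (by omega)
  have hLx := psi_step (L := L) (α := α) (x := L) (t := t) hL le_rfl
  simp only [bdM, bdD, bdS]
  have e : ∀ (u:ℕ), ∑ j ∈ range (L+1), (bdDist L α 0 u j - bdDist L α L u j) * ((L:ℝ) - 2*j)
      = (∑ j ∈ range (L+1), bdDist L α 0 u j * ((L:ℝ)-2*j))
        - ∑ j ∈ range (L+1), bdDist L α L u j * ((L:ℝ)-2*j) := by
    intro u
    rw [← Finset.sum_sub_distrib]
    apply Finset.sum_congr rfl
    intros
    ring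
  rw [e, e, h0, hLx]
  ring

lemma bdM_close (hα : α ∈ Set.Ioc (0:ℝ) 1) (hL : 1 ≤ L) (hr : 2*α/(L:ℝ) ≤ 1/2) (t : ℕ) :
    |bdM L α t - 2*(L:ℝ)*(1 - 2*α/(L:ℝ))^t| ≤ 4*α*L*L := by
  have hL0 : (0:ℝ) < L := by exact_mod_cast hL
  have hα0 := hα.1
  have hrpos : (0:ℝ) < 2*α/(L:ℝ) := by positivity
  have key := geom_err (r := 1 - 2*α/(L:ℝ)) (δ := 8*α^2*L)
    (by linarith) (by linarith)
    (fun t => bdM L α t - 2*(L:ℝ)*(1 - 2*α/(L:ℝ))^t)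
    (by simp only [pow_zero, mul_one]; rw [bdM_zero hL]; ring)
    (by
      intro u
      have hstep := bdM_step (L := L) (α := α) hL u
      have hsub := bdM_split hα hL u
      have hexp : (bdM L α (u+1) - 2*(L:ℝ)*(1 - 2*α/(L:ℝ))^(u+1))
          - (1 - 2*α/(L:ℝ)) * (bdM L α u - 2*(L:ℝ)*(1 - 2*α/(L:ℝ))^u)
          = (2*α/(L:ℝ)) * (bdM L α u - (L:ℝ) * bdS L α u) := by
        rw [hstep, pow_succ]
        field_simp
        ring
      rw [hexp, abs_mul, abs_of_nonneg (le_of_lt hrpos)]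
      calc (2*α/(L:ℝ)) * |bdM L α u - (L:ℝ) * bdS L α u|
          ≤ (2*α/(L:ℝ)) * (4*α*L*L) := by
            apply mul_le_mul_of_nonneg_left hsub (le_of_lt hrpos)
        _ = 8*α^2*L := by field_simp; ring)
  have := key t
  calc |bdM L α t - 2*(L:ℝ)*(1 - 2*α/(L:ℝ))^t| ≤ (8*α^2*L) / (1 - (1 - 2*α/(L:ℝ))) := this
    _ = 4*α*L*L := by
        rw [show (1 - (1 - 2*α/(L:ℝ))) = 2*α/(L:ℝ) by ring]
        field_simp
        ring

lemma bdTV_eq (hα : α ∈ Set.Ioc (0:ℝ) 1) (hL : 1 ≤ L) (t : ℕ) :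
    bdTV L (bdDist L α 0 t) (bdDist L α L t) = (1/2) * ∑ j ∈ range (L+1), |bdD L α t j| := by
  rw [bdTV_eq_half_l1 _ _ (by rw [bdDist_sum hL (by omega), bdDist_sum hL le_rfl])]
  rfl

lemma bdTV_le_one (hα : α ∈ Set.Ioc (0:ℝ) 1) (hL : 1 ≤ L) (t : ℕ) :
    bdTV L (bdDist L α 0 t) (bdDist L α L t) ≤ 1 := by
  rw [bdTV_eq hα hL t]
  have h : ∑ j ∈ range (L+1), |bdD L α t j|
      ≤ ∑ j ∈ range (L+1), (bdDist L α 0 t j + bdDist L α L t j) := by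
    apply Finset.sum_le_sum
    intro j _
    have h3 := bdDist_nonneg (L := L) hα 0 t j
    have h4 := bdDist_nonneg (L := L) hα L t j
    rw [bdD, abs_sub_le_iff]
    constructor <;> linarith
  rw [Finset.sum_add_distrib, bdDist_sum hL (by omega), bdDist_sum hL le_rfl] at h
  linarith

lemma bdTV_nonneg (hα : α ∈ Set.Ioc (0:ℝ) 1) (hL : 1 ≤ L) (t : ℕ) :
    0 ≤ bdTV L (bdDist L α 0 t) (bdDist L α L t) := by
  rw [bdTV_eq hα hL t]
  positivity

end Main2


/-- Part (b), second claim, of the key lemma: there is a universal constant `c > 0` with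
`‖P^t(0,·) − P^t(L,·)‖_TV = (1 − 2α/L)^t + O(Lα)`. -/
theorem bdTV_asymptotics :
    ∃ c : ℝ, 0 < c ∧ ∀ L : ℕ, 1 ≤ L → ∀ α : ℝ, α ∈ Set.Ioc (0 : ℝ) 1 → ∀ t : ℕ,
      |bdTV L (bdDist L α 0 t) (bdDist L α L t) - (1 - 2 * α / L) ^ t| ≤ c * L * α := by
  refine ⟨8, by norm_num, ?_⟩
  intro L hL α hα t
  obtain ⟨hα0, hα1⟩ := hα
  have hL0 : (0:ℝ) < L := by exact_mod_cast hL
  have hL1 : (1:ℝ) ≤ L := by exact_mod_cast hL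
  by_cases hsmall : α * L ≤ 1/4
  · -- main regime
    have hα14 : α ≤ 1/4 := by nlinarith
    have hr : 2*α/(L:ℝ) ≤ 1/2 := by
      rw [div_le_iff₀ hL0]
      nlinarith
    have hrpos : (0:ℝ) < 2*α/(L:ℝ) := by positivity
    set R := (1 - 2*α/(L:ℝ))^t with hR
    have hR0 : 0 ≤ R := by
      apply pow_nonneg
      linarith
    have htv := bdTV_eq (L := L) (α := α) ⟨hα0, hα1⟩ hL t
    set A := ∑ j ∈ range (L+1), |bdD L α t j| with hA
    set S := |bdS L α t| with hS
    set M := bdM L α t with hM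
    have h1 : |A - S| ≤ 8 * α * L := bdD_l1_vs_s ⟨hα0, hα1⟩ hL t
    have h2 : |M - (L:ℝ) * bdS L α t| ≤ 4 * α * L * L := bdM_split ⟨hα0, hα1⟩ hL t
    have h3 : |M - 2*(L:ℝ)*R| ≤ 4*α*L*L := bdM_close ⟨hα0, hα1⟩ hL hr t
    -- |L*S - |M|| ≤ 4αL²
    have h2' : abs (|M| - (L:ℝ)*S) ≤ 4 * α * L * L := by
      have habs := abs_abs_sub_abs_le_abs_sub M ((L:ℝ) * bdS L α t)
      rw [abs_mul, abs_of_nonneg (le_of_lt hL0)] at habs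
      exact le_trans habs h2
    have h3' : abs (|M| - 2*(L:ℝ)*R) ≤ 4*α*L*L := by
      have := abs_abs_sub_abs_le_abs_sub M (2*(L:ℝ)*R)
      rw [abs_of_nonneg (by positivity : (0:ℝ) ≤ 2*(L:ℝ)*R)] at this
      exact le_trans this h3
    -- combine
    have hchain : |(L:ℝ)*A - 2*(L:ℝ)*R| ≤ 16 * α * L * L := by
      have t1 : |(L:ℝ)*A - (L:ℝ)*S| ≤ 8 * α * L * L := by
        rw [← mul_sub, abs_mul, abs_of_nonneg (le_of_lt hL0)]
        nlinarith [abs_nonneg (A - S)]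
      have t2 := abs_sub_le ((L:ℝ)*A) ((L:ℝ)*S) (|M|)
      have t3 := abs_sub_le ((L:ℝ)*A) (|M|) (2*(L:ℝ)*R)
      have t4 : abs ((L:ℝ)*S - |M|) ≤ 4 * α * L * L := by
        rw [abs_sub_comm]; exact h2'
      linarith
    have hTVR : bdTV L (bdDist L α 0 t) (bdDist L α L t) - R = ((L:ℝ)*A - 2*(L:ℝ)*R) / (2*L) := by
      rw [htv]
      field_simp
    rw [hTVR, abs_div, abs_of_nonneg (by positivity : (0:ℝ) ≤ 2*(L:ℝ))]
    rw [div_le_iff₀ (by positivity)]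
    nlinarith [hchain]
  · -- trivial regime : α * L > 1/4
    push_neg at hsmall
    have htv1 := bdTV_le_one (L := L) (α := α) ⟨hα0, hα1⟩ hL t
    have htv0 := bdTV_nonneg (L := L) (α := α) ⟨hα0, hα1⟩ hL t
    have hRb : |(1 - 2*α/(L:ℝ))^t| ≤ 1 := by
      rw [abs_pow]
      apply pow_le_one₀ (abs_nonneg _)
      rw [abs_le]
      have h2a : 2*α/(L:ℝ) ≤ 2*α := by
        rw [div_le_iff₀ hL0]
        nlinarith
      have : 0 < 2*α/(L:ℝ) := by positivity
      constructor <;> nlinarith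
    have := abs_sub_abs_le_abs_sub (bdTV L (bdDist L α 0 t) (bdDist L α L t)) ((1 - 2*α/(L:ℝ))^t)
    have habs := abs_sub (bdTV L (bdDist L α 0 t) (bdDist L α L t)) ((1 - 2*α/(L:ℝ))^t)
    have : |bdTV L (bdDist L α 0 t) (bdDist L α L t)| ≤ 1 := by
      rw [abs_of_nonneg htv0]; exact htv1
    calc |bdTV L (bdDist L α 0 t) (bdDist L α L t) - (1 - 2*α/(L:ℝ))^t|
        ≤ |bdTV L (bdDist L α 0 t) (bdDist L α L t)| + |(1 - 2*α/(L:ℝ))^t| := abs_sub _ _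
      _ ≤ 2 := by linarith
      _ ≤ 8 * L * α := by nlinarith
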